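/- Let p be a prime, G a finite group, U ≤ D p-subgroups of G with C_D(U) ≤ U, and let N be a normal subgroup of G with U normal in N. If O^p(N) ∩ U ≤ Z(G), then O^p(N) ∩ D ≤ Z(G). (Here O^p(N) denotes the smallest normal subgroup of N with p-group quotient.) -/

import Mathlib

/-- The `p`-residual `O^p(H)` of a group `H`: the intersection of all normal
subgroups of `H` whose index is a power of `p` (equivalently, for finite groups,
the smallest normal subgroup with `p`-group quotient). -/
def pResidual (p : ℕ) (H : Type*) [Group H] : Subgroup H :=
  ⨅ K ∈ {K : Subgroup H | K.Normal ∧ ∃ n : ℕ, K.index = p ^ n}, K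

section Aux

variable {p : ℕ} {H : Type*} [Group H]

lemma mem_pResidual_iff {x : H} :
    x ∈ pResidual p H ↔
      ∀ K : Subgroup H, K.Normal → (∃ n : ℕ, K.index = p ^ n) → x ∈ K := by
  simp [pResidual, Subgroup.mem_iInf, and_imp]

lemma pResidual_le {K : Subgroup H} (h1 : K.Normal) (h2 : ∃ n : ℕ, K.index = p ^ n) :
    pResidual p H ≤ K := fun _ hx => mem_pResidual_iff.mp hx K h1 h2

instance pResidual_normal : (pResidual p H).Normal := by
  constructor
  intro n hn g
  rw [mem_pResidual_iff] at hn ⊢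
  intro K h1 h2
  exact h1.conj_mem n (hn K h1 h2) g

lemma pResidual_quotient_isPGroup [Fact p.Prime] [Finite H] :
    IsPGroup p (H ⧸ pResidual p H) := by
  intro x
  obtain ⟨n, rfl⟩ := QuotientGroup.mk_surjective x
  refine ⟨Nat.card H, ?_⟩
  rw [← QuotientGroup.mk_pow, QuotientGroup.eq_one_iff, mem_pResidual_iff]
  intro K h1 h2
  haveI := h1
  obtain ⟨m, hm⟩ := h2
  have hmem : n ^ p ^ m ∈ K := by
    have := K.pow_index_mem n
    rwa [hm] at this
  have hp2 : 2 ≤ p := (Fact.out : p.Prime).two_le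
  have hmle : m ≤ Nat.card H := by
    have h3 : p ^ m ∣ Nat.card H := hm ▸ K.index_dvd_card
    have hcardpos : 0 < Nat.card H := Nat.card_pos
    have h4 : p ^ m ≤ Nat.card H := Nat.le_of_dvd hcardpos h3
    have h5 : m < p ^ m := Nat.lt_pow_self (by omega)
    omega
  have h6 := K.pow_mem hmem (p ^ (Nat.card H - m))
  rwa [← pow_mul, ← pow_add, Nat.add_sub_cancel' hmle] at h6

end Aux

theorem stmt_0 (p : ℕ) [Fact p.Prime] (G : Type*) [Group G] [Finite G]
    (U D N : Subgroup G) (hUD : U ≤ D)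
    (hUp : IsPGroup p U) (hDp : IsPGroup p D)
    (hC : D ⊓ Subgroup.centralizer (U : Set G) ≤ U)
    [N.Normal] (hUN : U ≤ N)
    (hUnN : ∀ n ∈ N, ∀ u ∈ U, n * u * n⁻¹ ∈ U)
    (h : (pResidual p ↥N).map N.subtype ⊓ U ≤ Subgroup.center G) :
    (pResidual p ↥N).map N.subtype ⊓ D ≤ Subgroup.center G := by
  set R : Subgroup ↥N := pResidual p ↥N with hRdef
  set Rg : Subgroup G := R.map N.subtype with hRgdef
  have hRgN : Rg ≤ N := by
    rintro x ⟨y, _, rfl⟩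
    exact y.2
  -- conjugation by elements of N preserves Rg
  have hconj : ∀ g ∈ N, ∀ x ∈ Rg, g * x * g⁻¹ ∈ Rg := by
    rintro g hg x ⟨y, hy, rfl⟩
    exact ⟨⟨g, hg⟩ * y * ⟨g, hg⟩⁻¹, pResidual_normal.conj_mem y hy ⟨g, hg⟩, rfl⟩
  -- commutators of Rg with U lie in the center
  have hcomm : ∀ r ∈ Rg, ∀ u ∈ U, r * u * r⁻¹ * u⁻¹ ∈ Subgroup.center G := by
    intro r hr u hu
    refine h (Subgroup.mem_inf.mpr ⟨?_, mul_mem (hUnN r (hRgN hr) u hu) (inv_mem hu)⟩)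
    have e : r * u * r⁻¹ * u⁻¹ = r * (u * r⁻¹ * u⁻¹) := by group
    rw [e]
    exact mul_mem hr (hconj u (hUN hu) r⁻¹ (Rg.inv_mem hr))
  -- powers: r^m * u * r^-m = c^m * u where c = [r,u]
  have hpow : ∀ r ∈ Rg, ∀ u ∈ U, ∀ m : ℕ,
      r ^ m * u * (r ^ m)⁻¹ = (r * u * r⁻¹ * u⁻¹) ^ m * u := by
    intro r hr u hu m
    have hc := hcomm r hr u hu
    rw [Subgroup.mem_center_iff] at hc
    set c := r * u * r⁻¹ * u⁻¹ with hcdef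
    have h1 : r * u = c * u * r := by rw [hcdef]; group
    have key : ∀ k : ℕ, r ^ k * u = c ^ k * u * r ^ k := by
      intro k
      induction k with
      | zero => simp
      | succ k ih =>
        calc r ^ (k + 1) * u = r ^ k * (r * u) := by rw [pow_succ, mul_assoc]
          _ = r ^ k * (c * u * r) := by rw [h1]
          _ = r ^ k * c * u * r := by simp [mul_assoc]
          _ = c * r ^ k * u * r := by rw [hc (r ^ k)]
          _ = c * (r ^ k * u) * r := by simp [mul_assoc]
          _ = c * (c ^ k * u * r ^ k) * r := by rw [ih]
          _ = c * c ^ k * u * (r ^ k * r) := by simp [mul_assoc]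
          _ = c ^ (k + 1) * u * r ^ (k + 1) := by
              rw [← pow_succ', ← pow_succ]
    rw [key m, mul_inv_cancel_right]
  -- exponent of U
  obtain ⟨e, he⟩ := IsPGroup.iff_card.mp hUp
  have hUe : ∀ u ∈ U, u ^ p ^ e = 1 := by
    intro u hu
    have h1 : (⟨u, hu⟩ : U) ^ p ^ e = 1 := by
      rw [← he]; exact pow_card_eq_one'
    exact congrArg Subtype.val h1
  -- p^e-th powers of elements of Rg centralize U
  have hcent : ∀ r ∈ Rg, r ^ p ^ e ∈ Subgroup.centralizer (U : Set G) := by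
    intro r hr
    rw [Subgroup.mem_centralizer_iff]
    intro u hu
    have h1 := hpow r hr u hu (p ^ e)
    have h2 : (r * u * r⁻¹ * u⁻¹) ∈ U := mul_mem (hUnN r (hRgN hr) u hu) (inv_mem hu)
    rw [hUe _ h2, one_mul] at h1
    -- h1 : r ^ p ^ e * u * (r ^ p ^ e)⁻¹ = u
    have h3 := congrArg (· * r ^ p ^ e) h1
    simpa [mul_assoc] using h3.symm
  -- the centralizer of U inside N
  have hU'normal : (U.subgroupOf N).Normal := by
    constructor
    intro u hu g
    rw [Subgroup.mem_subgroupOf] at hu ⊢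
    exact hUnN g g.2 u hu
  set C' : Subgroup ↥N := Subgroup.centralizer ((U.subgroupOf N : Subgroup ↥N) : Set ↥N)
    with hC'def
  have hC'normal : C'.Normal := by
    constructor
    intro c hc g
    rw [hC'def, Subgroup.mem_centralizer_iff] at hc ⊢
    intro u hu
    have h1 : g⁻¹ * u * g ∈ (U.subgroupOf N : Subgroup ↥N) := by
      have := hU'normal.conj_mem u hu g⁻¹
      simpa using this
    have h2 := hc _ h1
    have h3 : g * (g⁻¹ * u * g * c) * g⁻¹ = g * (c * (g⁻¹ * u * g)) * g⁻¹ := by rw [h2]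
    calc u * (g * c * g⁻¹) = g * (g⁻¹ * u * g * c) * g⁻¹ := by group
      _ = g * (c * (g⁻¹ * u * g)) * g⁻¹ := h3
      _ = g * c * g⁻¹ * u := by group
  haveI hKnormal : (R ⊓ C').Normal := Subgroup.normal_inf_normal R C'
  -- N / (R ⊓ C') is a p-group
  have hKquot : IsPGroup p (↥N ⧸ (R ⊓ C')) := by
    intro x
    obtain ⟨n, rfl⟩ := QuotientGroup.mk_surjective x
    obtain ⟨a, ha⟩ := pResidual_quotient_isPGroup (p := p) (H := ↥N) (QuotientGroup.mk n)
    rw [← QuotientGroup.mk_pow, QuotientGroup.eq_one_iff] at ha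
    refine ⟨a + e, ?_⟩
    rw [← QuotientGroup.mk_pow, QuotientGroup.eq_one_iff]
    have hpowsplit : n ^ p ^ (a + e) = (n ^ p ^ a) ^ p ^ e := by
      rw [← pow_mul, ← pow_add]
    rw [hpowsplit]
    refine Subgroup.mem_inf.mpr ⟨Subgroup.pow_mem _ ha _, ?_⟩
    -- centralizer part
    have hrg : ((n ^ p ^ a : ↥N) : G) ∈ Rg := ⟨n ^ p ^ a, ha, rfl⟩
    have hcg := hcent _ hrg
    rw [Subgroup.mem_centralizer_iff] at hcg
    rw [hC'def, Subgroup.mem_centralizer_iff]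
    intro u hu
    have huU : (u : G) ∈ U := by
      have h4 : u ∈ U.subgroupOf N := hu
      rwa [Subgroup.mem_subgroupOf] at h4
    have h1 := hcg (u : G) huU
    refine Subtype.ext ?_
    push_cast
    exact h1
  have hKindex : ∃ m : ℕ, (R ⊓ C').index = p ^ m := by
    obtain ⟨m, hm⟩ := IsPGroup.iff_card.mp hKquot
    exact ⟨m, by rw [Subgroup.index_eq_card, hm]⟩
  have hRK : R ≤ R ⊓ C' := pResidual_le hKnormal hKindex
  have hRC' : R ≤ C' := fun x hx => (hRK hx).2
  -- Rg centralizes U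
  have hRgcent : Rg ≤ Subgroup.centralizer (U : Set G) := by
    rintro x ⟨y, hy, rfl⟩
    have h1 := hRC' hy
    rw [hC'def, Subgroup.mem_centralizer_iff] at h1
    rw [Subgroup.mem_centralizer_iff]
    intro u hu
    have h2 := h1 ⟨u, hUN hu⟩
      (SetLike.mem_coe.mpr (Subgroup.mem_subgroupOf.mpr hu))
    have h3 := congrArg Subtype.val h2
    push_cast at h3
    exact h3
  intro g hg
  obtain ⟨hg1, hg2⟩ := Subgroup.mem_inf.mp hg
  exact h (Subgroup.mem_inf.mpr ⟨hg1, hC (Subgroup.mem_inf.mpr ⟨hg2, hRgcent hg1⟩)⟩)
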